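/- Let W be a nonzero element of H containing the letter L. Then every word U equivalent to W has exactly one of the following forms: (i) U = L·A with A a word in a1, a2, a3; (ii) U = M·A1·P·A2·g·A3 with A1, A2, A3 words in a1, a2, a3; (iii) U contains neither L nor g, contains exactly one occurrence each of M (as the first letter), P, R, Q, and exactly one letter from {t1, t2, t3, s1, s2}, and the letters P, R, Q appear in that left-to-right order. -/

import Mathlib

inductive Phi
  | L | M | P | Q | R | g | s1 | s2 | t1 | t2 | t3 | a1 | a2 | a3
deriving DecidableEq

open Phi

abbrev W0 := WithZero (FreeMonoid Phi)

def w (l : List Phi) : W0 := ((FreeMonoid.ofList l : FreeMonoid Phi) : W0)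

def ai : Fin 3 → Phi
  | 0 => a1 | 1 => a2 | 2 => a3

def ti : Fin 3 → Phi
  | 0 => t1 | 1 => t2 | 2 => t3

def si : Fin 2 → Phi
  | 0 => s1 | 1 => s2

/-- `x` is one of the letters `a1, a2, a3`. -/
def isA (x : Phi) : Prop := x = a1 ∨ x = a2 ∨ x = a3

/-- The defining relations (1)–(14) of the semigroup `H`. -/
inductive rel : W0 → W0 → Prop
  | r1L (x : Phi) : rel (w [x, L]) 0
  | r1M (x : Phi) : rel (w [x, M]) 0
  | r2 : rel (w [L]) (w [M, P, g])
  | r3 (i : Fin 3) : rel (w [g, ai i]) (w [ai i, g])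
  | r4 (x : Phi) (h : ¬ isA x) : rel (w [g, x]) 0
  | r5 (i j : Fin 3) : rel (w [ai i, g, ai j]) (w [ai i, R, s1, Q, ai j])
  | r6 (i : Fin 3) (x : Phi) (h : x = R ∨ isA x) : rel (w [ti i, x]) (w [x, ti i])
  | r7 (i : Fin 3) : rel (w [P, ai i, ti i]) (w [ai i, P, s1])
  | r8 (i j : Fin 3) (h : i ≠ j) : rel (w [P, ai j, ti i]) (w [ai j, P, s2])
  | r9 (i : Fin 3) (j : Fin 2) : rel (w [si j, ai i]) (w [ai i, si j])
  | r10 : rel (w [s1, R]) (w [R, s1])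
  | r11 (i : Fin 3) : rel (w [s1, Q, ai i]) (w [ti i, ai i, Q])
  | r12 : rel (w [P, R, s1]) 0
  | r13 (i : Fin 3) : rel (w [s2, R, ai i]) (w [ai i, s2, R])
  | r14 (i : Fin 3) : rel (w [s2, R, Q, ai i]) (w [R, ti i, ai i, Q])

/-- The congruence on the free monoid with zero generated by the relations. -/
def hCon : Con W0 := conGen rel

/-- The semigroup (with zero) `H` of the paper. -/
abbrev H := hCon.Quotient

/-- The quotient map. -/
def q : W0 →* H := hCon.mk'

/-- `l` is a word in the letters `a1, a2, a3`. -/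
def Aword (l : List Phi) : Prop := ∀ x ∈ l, isA x

/-- `l` is square-free: it contains no factor `Y ++ Y` with `Y` nonempty. -/
def SqFree (l : List Phi) : Prop := ∀ Y : List Phi, Y ≠ [] → ¬ (Y ++ Y) <:+: l

/-- `x` is one of `t1, t2, t3, s1, s2`. -/
def isTS : Phi → Bool
  | t1 | t2 | t3 | s1 | s2 => true
  | _ => false

/-! ### Auxiliary machinery for the proof of Statement 11 -/

section Stmt11Aux

instance : Fintype Phi :=
  ⟨⟨Multiset.ofList [L, M, P, Q, R, g, s1, s2, t1, t2, t3, a1, a2, a3],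
    Multiset.coe_nodup.mpr (by decide)⟩, fun x => by cases x <;> decide⟩

/-- `x` is one of `a1, a2, a3` (boolean version). -/
def isAb : Phi → Bool
  | a1 | a2 | a3 => true
  | _ => false

instance : DecidablePred isA := fun x => by unfold isA; infer_instance

/-- States of the invariant automaton. -/
inductive St
  | q0 | acc | m10 | m11 | m20 | m21 | m30 | m31 | m40 | dead
deriving DecidableEq

instance : Fintype St :=
  ⟨⟨Multiset.ofList [.q0, .acc, .m10, .m11, .m20, .m21, .m30, .m31, .m40, .dead],
    Multiset.coe_nodup.mpr (by decide)⟩, fun x => by cases x <;> decide⟩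

def dfa (s : St) (x : Phi) : St :=
  match s with
  | .q0 => if x = L then .acc else if x = M then .m10 else .dead
  | .acc => if isAb x then .acc else .dead
  | .m10 => if isAb x then .m10 else if isTS x then .m11 else if x = P then .m20 else .dead
  | .m11 => if isAb x then .m11 else if x = P then .m21 else .dead
  | .m20 => if isAb x then .m20 else if isTS x then .m21 else
      if x = g then .acc else if x = R then .m30 else .dead
  | .m21 => if isAb x then .m21 else if x = R then .m31 else .dead
  | .m30 => if isAb x then .m30 else if isTS x then .m31 else if x = Q then .m40 else .dead
  | .m31 => if isAb x then .m31 else if x = Q then .acc else .dead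
  | .m40 => if isAb x then .m40 else if isTS x then .acc else .dead
  | .dead => .dead

def runL (s : St) (l : List Phi) : St := l.foldl dfa s

lemma runL_append (s : St) (l1 l2 : List Phi) : runL s (l1 ++ l2) = runL (runL s l1) l2 :=
  List.foldl_append ..

def Aw (l : List Phi) : Prop := ∀ x ∈ l, isAb x = true
def ATl (l : List Phi) : Prop := ∀ x ∈ l, (isAb x || isTS x) = true
def nts (l : List Phi) : ℕ := l.countP isTS

def stSpec : St → List Phi → Prop
  | .q0, U => U = []
  | .m10, U => ∃ B, Aw B ∧ U = M :: B
  | .m11, U => ∃ B, ATl B ∧ nts B = 1 ∧ U = M :: B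
  | .m20, U => ∃ B C, Aw B ∧ Aw C ∧ U = M :: B ++ P :: C
  | .m21, U => ∃ B C, ATl B ∧ ATl C ∧ nts B + nts C = 1 ∧ U = M :: B ++ P :: C
  | .m30, U => ∃ B C D, Aw B ∧ Aw C ∧ Aw D ∧ U = M :: B ++ P :: C ++ R :: D
  | .m31, U => ∃ B C D, ATl B ∧ ATl C ∧ ATl D ∧ nts B + nts C + nts D = 1 ∧
      U = M :: B ++ P :: C ++ R :: D
  | .m40, U => ∃ B C D E, Aw B ∧ Aw C ∧ Aw D ∧ Aw E ∧
      U = M :: B ++ P :: C ++ R :: D ++ Q :: E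
  | .acc, U => (∃ B, Aw B ∧ U = L :: B) ∨
      (∃ B C D, Aw B ∧ Aw C ∧ Aw D ∧ U = M :: B ++ P :: C ++ g :: D) ∨
      (∃ B C D E, ATl B ∧ ATl C ∧ ATl D ∧ ATl E ∧
        nts B + nts C + nts D + nts E = 1 ∧
        U = M :: B ++ P :: C ++ R :: D ++ Q :: E)
  | .dead, _ => True

lemma Aw_nil : Aw [] := by intro x hx; simp at hx
lemma ATl_nil : ATl [] := by intro x hx; simp at hx
lemma Aw_snoc {l x} (h : Aw l) (hx : isAb x = true) : Aw (l ++ [x]) := by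
  intro y hy; rcases List.mem_append.mp hy with h1 | h1
  · exact h y h1
  · simp at h1; subst h1; exact hx
lemma ATl_of_Aw {l} (h : Aw l) : ATl l := fun x hx => by simp [h x hx]
lemma ATl_snoc {l x} (h : ATl l) (hx : (isAb x || isTS x) = true) : ATl (l ++ [x]) := by
  intro y hy; rcases List.mem_append.mp hy with h1 | h1
  · exact h y h1
  · simp at h1; subst h1; exact hx
lemma nts_of_Aw {l} (h : Aw l) : nts l = 0 := by
  unfold nts
  rw [List.countP_eq_zero]
  intro x hx
  have := h x hx
  cases x <;> simp_all [isAb, isTS]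
lemma nts_snoc_a {l x} (hx : isTS x = false) : nts (l ++ [x]) = nts l := by
  simp [nts, List.countP_append, List.countP_cons, hx]
lemma nts_snoc_ts {l x} (hx : isTS x = true) : nts (l ++ [x]) = nts l + 1 := by
  simp [nts, List.countP_append, List.countP_cons, hx]
lemma nts_nil : nts [] = 0 := rfl

lemma phi_cover (x : Phi) :
    isAb x = true ∨ isTS x = true ∨ x = L ∨ x = M ∨ x = P ∨ x = Q ∨ x = R ∨ x = g := by
  cases x <;> simp [isAb, isTS]

lemma isAb_facts : ∀ x : Phi, isAb x = true →
    x ≠ L ∧ x ≠ M ∧ x ≠ P ∧ x ≠ Q ∧ x ≠ R ∧ x ≠ g ∧ isTS x = false := by decide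

lemma isTS_facts : ∀ x : Phi, isTS x = true →
    x ≠ L ∧ x ≠ M ∧ x ≠ P ∧ x ≠ Q ∧ x ≠ R ∧ x ≠ g ∧ isAb x = false := by decide

lemma spec_step (s : St) (x : Phi) (U : List Phi) (h : stSpec s U) :
    stSpec (dfa s x) (U ++ [x]) := by
  rcases phi_cover x with hA | hT | rfl | rfl | rfl | rfl | rfl | rfl
  · -- x is an a-letter
    obtain ⟨n1, n2, n3, n4, n5, n6, n7⟩ := isAb_facts x hA
    cases s <;> simp only [dfa, hA, n1, n2, n3, n4, n5, n6, n7, if_true, if_false,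
      Bool.false_eq_true] <;> try trivial
    · -- acc
      rcases h with ⟨B, hB, rfl⟩ | ⟨B, C, D, hB, hC, hD, rfl⟩ |
        ⟨B, C, D, E, hB, hC, hD, hE, hn, rfl⟩
      · exact Or.inl ⟨B ++ [x], Aw_snoc hB hA, by simp⟩
      · exact Or.inr (Or.inl ⟨B, C, D ++ [x], hB, hC, Aw_snoc hD hA, by simp⟩)
      · exact Or.inr (Or.inr ⟨B, C, D, E ++ [x], hB, hC, hD, ATl_snoc hE (by simp [hA]),
          by rw [nts_snoc_a n7]; exact hn, by simp⟩)
    · obtain ⟨B, hB, rfl⟩ := h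
      exact ⟨B ++ [x], Aw_snoc hB hA, by simp⟩
    · obtain ⟨B, hB, h1, rfl⟩ := h
      exact ⟨B ++ [x], ATl_snoc hB (by simp [hA]), by rw [nts_snoc_a n7]; exact h1, by simp⟩
    · obtain ⟨B, C, hB, hC, rfl⟩ := h
      exact ⟨B, C ++ [x], hB, Aw_snoc hC hA, by simp⟩
    · obtain ⟨B, C, hB, hC, h1, rfl⟩ := h
      exact ⟨B, C ++ [x], hB, ATl_snoc hC (by simp [hA]), by rw [nts_snoc_a n7]; exact h1,
        by simp⟩
    · obtain ⟨B, C, D, hB, hC, hD, rfl⟩ := h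
      exact ⟨B, C, D ++ [x], hB, hC, Aw_snoc hD hA, by simp⟩
    · obtain ⟨B, C, D, hB, hC, hD, h1, rfl⟩ := h
      exact ⟨B, C, D ++ [x], hB, hC, ATl_snoc hD (by simp [hA]),
        by rw [nts_snoc_a n7]; exact h1, by simp⟩
    · obtain ⟨B, C, D, E, hB, hC, hD, hE, rfl⟩ := h
      exact ⟨B, C, D, E ++ [x], hB, hC, hD, Aw_snoc hE hA, by simp⟩
  · -- x is a t/s-letter
    obtain ⟨n1, n2, n3, n4, n5, n6, n7⟩ := isTS_facts x hT
    cases s <;> simp only [dfa, hT, n1, n2, n3, n4, n5, n6, n7, if_true, if_false,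
      Bool.false_eq_true] <;> try trivial
    · obtain ⟨B, hB, rfl⟩ := h
      exact ⟨B ++ [x], ATl_snoc (ATl_of_Aw hB) (by simp [hT]),
        by rw [nts_snoc_ts hT, nts_of_Aw hB], by simp⟩
    · obtain ⟨B, C, hB, hC, rfl⟩ := h
      exact ⟨B, C ++ [x], ATl_of_Aw hB, ATl_snoc (ATl_of_Aw hC) (by simp [hT]),
        by rw [nts_snoc_ts hT, nts_of_Aw hB, nts_of_Aw hC], by simp⟩
    · obtain ⟨B, C, D, hB, hC, hD, rfl⟩ := h
      exact ⟨B, C, D ++ [x], ATl_of_Aw hB, ATl_of_Aw hC, ATl_snoc (ATl_of_Aw hD) (by simp [hT]),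
        by rw [nts_snoc_ts hT, nts_of_Aw hB, nts_of_Aw hC, nts_of_Aw hD], by simp⟩
    · obtain ⟨B, C, D, E, hB, hC, hD, hE, rfl⟩ := h
      exact Or.inr (Or.inr ⟨B, C, D, E ++ [x], ATl_of_Aw hB, ATl_of_Aw hC, ATl_of_Aw hD,
        ATl_snoc (ATl_of_Aw hE) (by simp [hT]),
        by rw [nts_snoc_ts hT, nts_of_Aw hB, nts_of_Aw hC, nts_of_Aw hD, nts_of_Aw hE],
        by simp⟩)
  · -- x = L
    cases s <;> (try simp only [dfa, isAb, isTS, reduceIte, reduceCtorEq, if_true, if_false]) <;>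
      try trivial
    subst h
    exact Or.inl ⟨[], Aw_nil, rfl⟩
  · -- x = M
    cases s <;> (try simp only [dfa, isAb, isTS, reduceIte, reduceCtorEq, if_true, if_false]) <;>
      try trivial
    subst h
    exact ⟨[], Aw_nil, rfl⟩
  · -- x = P
    cases s <;> (try simp only [dfa, isAb, isTS, reduceIte, reduceCtorEq, if_true, if_false]) <;>
      try trivial
    · obtain ⟨B, hB, rfl⟩ := h
      exact ⟨B, [], hB, Aw_nil, by simp⟩
    · obtain ⟨B, hB, h1, rfl⟩ := h
      exact ⟨B, [], hB, ATl_nil, by simpa [nts_nil] using h1, by simp⟩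
  · -- x = Q
    cases s <;> (try simp only [dfa, isAb, isTS, reduceIte, reduceCtorEq, if_true, if_false]) <;>
      try trivial
    · obtain ⟨B, C, D, hB, hC, hD, rfl⟩ := h
      exact ⟨B, C, D, [], hB, hC, hD, Aw_nil, by simp⟩
    · obtain ⟨B, C, D, hB, hC, hD, h1, rfl⟩ := h
      exact Or.inr (Or.inr ⟨B, C, D, [], hB, hC, hD, ATl_nil,
        by simpa [nts_nil] using h1, by simp⟩)
  · -- x = R
    cases s <;> (try simp only [dfa, isAb, isTS, reduceIte, reduceCtorEq, if_true, if_false]) <;>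
      try trivial
    · obtain ⟨B, C, hB, hC, rfl⟩ := h
      exact ⟨B, C, [], hB, hC, Aw_nil, by simp⟩
    · obtain ⟨B, C, hB, hC, h1, rfl⟩ := h
      exact ⟨B, C, [], hB, hC, ATl_nil, by simpa [nts_nil] using h1, by simp⟩
  · -- x = g
    cases s <;> (try simp only [dfa, isAb, isTS, reduceIte, reduceCtorEq, if_true, if_false]) <;>
      try trivial
    obtain ⟨B, C, hB, hC, rfl⟩ := h
    exact Or.inr (Or.inl ⟨B, C, [], hB, hC, Aw_nil, by simp⟩)

lemma spec_runL (U : List Phi) : stSpec (runL .q0 U) U := by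
  induction U using List.reverseRecOn with
  | nil => rfl
  | append_singleton U x ih =>
    rw [runL_append]
    exact spec_step _ x U ih

/-! ### The syntactic congruence argument -/

def accw (l : List Phi) : Prop := runL .q0 l = .acc

def Tset (x : W0) : Prop := hCon x 0 ∨ ∃ l, x = w l ∧ accw l

lemma w_inj {l1 l2 : List Phi} (h : w l1 = w l2) : l1 = l2 :=
  congrArg FreeMonoid.toList (WithZero.coe_inj.mp h)

lemma hCon_of_rel {a b : W0} (h : rel a b) : hCon a b := ConGen.Rel.of _ _ h

lemma hCon_ctx (u v : W0) {a b : W0} (h : hCon a b) : hCon (u * a * v) (u * b * v) :=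
  hCon.mul (hCon.mul (hCon.refl u) h) (hCon.refl v)

lemma Tset_mono {a b : List Phi} (hab : hCon (w a) (w b)) (hrun : ∀ s, runL s a = runL s b)
    (u v : W0) (h : Tset (u * w a * v)) : Tset (u * w b * v) := by
  have hctx : hCon (u * w a * v) (u * w b * v) := hCon_ctx u v hab
  rcases h with h0 | ⟨l, hl, hacc⟩
  · exact Or.inl (hCon.trans (hCon.symm hctx) h0)
  · by_cases hu : u = 0
    · subst hu; rw [zero_mul, zero_mul] at hl
      exact absurd hl.symm WithZero.coe_ne_zero
    by_cases hv : v = 0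
    · subst hv; rw [mul_zero] at hl
      exact absurd hl.symm WithZero.coe_ne_zero
    obtain ⟨mu, hmu⟩ := WithZero.ne_zero_iff_exists.mp hu
    obtain ⟨mv, hmv⟩ := WithZero.ne_zero_iff_exists.mp hv
    subst hmu; subst hmv
    have hl' : w ((FreeMonoid.toList mu ++ a) ++ FreeMonoid.toList mv) = w l := hl
    have hle := w_inj hl'
    refine Or.inr ⟨(FreeMonoid.toList mu ++ b) ++ FreeMonoid.toList mv, rfl, ?_⟩
    show runL .q0 _ = .acc
    rw [runL_append, runL_append, ← hrun]
    rw [← runL_append, ← runL_append, ← List.append_assoc, hle]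
    exact hacc

lemma Tset_zero_rel {a : W0} (h : rel a 0) (u v : W0) :
    Tset (u * a * v) ↔ Tset (u * 0 * v) := by
  constructor <;> intro _
  · rw [mul_zero, zero_mul]; exact Or.inl (hCon.refl 0)
  · left
    have h2 := hCon_ctx u v (hCon_of_rel h)
    rwa [mul_zero, zero_mul] at h2

lemma Tset_iff {a b : List Phi} (hab : rel (w a) (w b)) (hrun : ∀ s, runL s a = runL s b)
    (u v : W0) : Tset (u * w a * v) ↔ Tset (u * w b * v) :=
  ⟨Tset_mono (hCon_of_rel hab) hrun u v,
   Tset_mono (hCon.symm (hCon_of_rel hab)) (fun s => (hrun s).symm) u v⟩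

lemma rel_syn {a b : W0} (h : rel a b) (u v : W0) : Tset (u * a * v) ↔ Tset (u * b * v) := by
  cases h with
  | r1L x => exact Tset_zero_rel (rel.r1L x) u v
  | r1M x => exact Tset_zero_rel (rel.r1M x) u v
  | r4 x hx => exact Tset_zero_rel (rel.r4 x hx) u v
  | r12 => exact Tset_zero_rel rel.r12 u v
  | r2 => exact Tset_iff rel.r2 (by decide) u v
  | r3 i =>
    have hd : ∀ (i : Fin 3) (s : St), runL s [g, ai i] = runL s [ai i, g] := by decide
    exact Tset_iff (rel.r3 i) (hd i) u v
  | r5 i j =>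
    have hd : ∀ (i j : Fin 3) (s : St),
        runL s [ai i, g, ai j] = runL s [ai i, R, s1, Q, ai j] := by decide
    exact Tset_iff (rel.r5 i j) (hd i j) u v
  | r6 i x hx =>
    have hd : ∀ (i : Fin 3) (x : Phi), (x = R ∨ isA x) → ∀ s : St,
        runL s [ti i, x] = runL s [x, ti i] := by decide
    exact Tset_iff (rel.r6 i x hx) (hd i x hx) u v
  | r7 i =>
    have hd : ∀ (i : Fin 3) (s : St), runL s [P, ai i, ti i] = runL s [ai i, P, s1] := by decide
    exact Tset_iff (rel.r7 i) (hd i) u v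
  | r8 i j hij =>
    have hd : ∀ (i j : Fin 3), i ≠ j → ∀ s : St,
        runL s [P, ai j, ti i] = runL s [ai j, P, s2] := by decide
    exact Tset_iff (rel.r8 i j hij) (hd i j hij) u v
  | r9 i j =>
    have hd : ∀ (i : Fin 3) (j : Fin 2) (s : St),
        runL s [si j, ai i] = runL s [ai i, si j] := by decide
    exact Tset_iff (rel.r9 i j) (hd i j) u v
  | r10 => exact Tset_iff rel.r10 (by decide) u v
  | r11 i =>
    have hd : ∀ (i : Fin 3) (s : St), runL s [s1, Q, ai i] = runL s [ti i, ai i, Q] := by decide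
    exact Tset_iff (rel.r11 i) (hd i) u v
  | r13 i =>
    have hd : ∀ (i : Fin 3) (s : St), runL s [s2, R, ai i] = runL s [ai i, s2, R] := by decide
    exact Tset_iff (rel.r13 i) (hd i) u v
  | r14 i =>
    have hd : ∀ (i : Fin 3) (s : St),
        runL s [s2, R, Q, ai i] = runL s [R, ti i, ai i, Q] := by decide
    exact Tset_iff (rel.r14 i) (hd i) u v

def synCon : Con W0 where
  r x y := ∀ u v : W0, Tset (u * x * v) ↔ Tset (u * y * v)
  iseqv := ⟨fun _ _ _ => Iff.rfl, fun h u v => (h u v).symm,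
    fun h1 h2 u v => (h1 u v).trans (h2 u v)⟩
  mul' := by
    intro a b c d h1 h2 u v
    rw [← mul_assoc u a c, ← mul_assoc u b d]
    have h2' := h2 (u * a) v
    have h1' := h1 u (d * v)
    simp only [← mul_assoc] at h1'
    exact h2'.trans h1'

lemma hCon_le_syn : hCon ≤ synCon :=
  Con.conGen_le.mpr fun _ _ h => rel_syn h

/-! ### Words containing `L` -/

lemma split_nonA (l : List Phi) :
    Aword l ∨ ∃ A x r, Aword A ∧ ¬ isA x ∧ l = A ++ x :: r := by
  induction l with
  | nil => exact Or.inl (fun x hx => absurd hx List.not_mem_nil)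
  | cons y l ih =>
    by_cases hy : isA y
    · rcases ih with h | ⟨A, x, r, hA, hx, rfl⟩
      · left
        intro z hz
        rcases List.mem_cons.mp hz with rfl | hz
        · exact hy
        · exact h z hz
      · right
        refine ⟨y :: A, x, r, ?_, hx, rfl⟩
        intro z hz
        rcases List.mem_cons.mp hz with rfl | hz
        · exact hy
        · exact hA z hz
    · exact Or.inr ⟨[], y, l, fun z hz => absurd hz List.not_mem_nil, hy, rfl⟩

lemma g_slide (A : List Phi) (hA : Aword A) (m : List Phi) :
    hCon (w (g :: (A ++ m))) (w (A ++ g :: m)) := by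
  induction A with
  | nil => exact hCon.refl _
  | cons y A ih =>
    have hy : isA y := hA y (List.mem_cons_self ..)
    have hA' : Aword A := fun z hz => hA z (List.mem_cons_of_mem _ hz)
    obtain ⟨i, rfl⟩ : ∃ i, y = ai i := by
      rcases hy with rfl | rfl | rfl
      exacts [⟨0, rfl⟩, ⟨1, rfl⟩, ⟨2, rfl⟩]
    have step : hCon (w [g, ai i] * w (A ++ m)) (w [ai i, g] * w (A ++ m)) :=
      hCon.mul (hCon_of_rel (rel.r3 i)) (hCon.refl _)
    have step2 : hCon (w [ai i] * w (g :: (A ++ m))) (w [ai i] * w (A ++ g :: m)) :=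
      hCon.mul (hCon.refl _) (ih hA')
    exact hCon.trans step step2

lemma L_zero_or_form (W : List Phi) (hL : L ∈ W) :
    (∃ A, Aword A ∧ W = L :: A) ∨ hCon (w W) 0 := by
  obtain ⟨p, q', rfl⟩ := List.append_of_mem hL
  rcases List.eq_nil_or_concat p with rfl | ⟨p', x, rfl⟩
  · rcases split_nonA q' with h | ⟨A, x, r, hA, hx, rfl⟩
    · exact Or.inl ⟨q', h, rfl⟩
    · right
      have s1' : hCon (w (L :: (A ++ x :: r))) (w ([M, P] ++ (g :: (A ++ x :: r)))) :=
        hCon.mul (hCon_of_rel rel.r2) (hCon.refl (w (A ++ x :: r)))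
      have s2' : hCon (w ([M, P] ++ (g :: (A ++ x :: r)))) (w ([M, P] ++ (A ++ g :: x :: r))) :=
        hCon.mul (hCon.refl (w ([M, P] : List Phi))) (g_slide A hA (x :: r))
      have s3' : hCon (w ([M, P] ++ (A ++ g :: x :: r))) 0 := by
        have h0 := hCon_ctx (w ([M, P] ++ A)) (w r) (hCon_of_rel (rel.r4 x hx))
        rw [mul_zero, zero_mul] at h0
        have e : ([M, P] ++ (A ++ g :: x :: r) : List Phi) =
            ((([M, P] ++ A) ++ [g, x]) ++ r) := by simp
        rw [e]
        exact h0
      have : ([] : List Phi) ++ L :: (A ++ x :: r) = L :: (A ++ x :: r) := rfl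
      rw [this]
      exact hCon.trans (hCon.trans s1' s2') s3'
  · right
    have h0 := hCon_ctx (w p') (w q') (hCon_of_rel (rel.r1L x))
    rw [mul_zero, zero_mul] at h0
    have e : p'.concat x ++ L :: q' = (p' ++ [x, L]) ++ q' := by
      simp [List.concat_eq_append]
    rw [e]
    exact h0

lemma runL_acc_of_Aword (A : List Phi) (hA : Aword A) : runL .acc A = .acc := by
  induction A with
  | nil => rfl
  | cons y A ih =>
    have hy : isA y := hA y (List.mem_cons_self ..)
    have hd : dfa .acc y = .acc := by rcases hy with rfl | rfl | rfl <;> rfl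
    show runL (dfa .acc y) A = .acc
    rw [hd]
    exact ih (fun z hz => hA z (List.mem_cons_of_mem _ hz))

lemma accw_Lform (A : List Phi) (hA : Aword A) : accw (L :: A) := by
  show runL (dfa .q0 L) A = .acc
  exact runL_acc_of_Aword A hA

lemma isA_of_isAb : ∀ x : Phi, isAb x = true → isA x := by decide

lemma Aword_of_Aw {l} (h : Aw l) : Aword l := fun x hx => isA_of_isAb x (h x hx)

lemma ATl_not_mem {l : List Phi} (h : ATl l) {y : Phi} (hy : (isAb y || isTS y) = false) :
    y ∉ l := fun hmem => by
  have := h y hmem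
  rw [hy] at this
  simp at this

lemma ATl_count {l : List Phi} (h : ATl l) {y : Phi} (hy : (isAb y || isTS y) = false) :
    l.count y = 0 :=
  List.count_eq_zero.mpr (ATl_not_mem h hy)

end Stmt11Aux

/-- trichotomy for words equivalent to a nonzero word containing `L`. -/
theorem stmt11 (W U : List Phi) (hL : L ∈ W) (hnz : q (w W) ≠ q 0)
    (hequiv : hCon (w U) (w W)) :
    (∃ A : List Phi, Aword A ∧ U = L :: A) ∨
    (∃ A1 A2 A3 : List Phi, Aword A1 ∧ Aword A2 ∧ Aword A3 ∧
      U = [M] ++ A1 ++ [P] ++ A2 ++ [g] ++ A3) ∨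
    (L ∉ U ∧ g ∉ U ∧
      U.count M = 1 ∧ U.head? = some M ∧
      U.count P = 1 ∧ U.count R = 1 ∧ U.count Q = 1 ∧
      U.countP isTS = 1 ∧
      ∃ B1 B2 B3 B4 : List Phi,
        U = B1 ++ [P] ++ B2 ++ [R] ++ B3 ++ [Q] ++ B4) := by
  have hWn0 : ¬ hCon (w W) 0 := fun h => hnz ((Con.eq hCon).mpr h)
  have hWT : Tset (w W) := by
    rcases L_zero_or_form W hL with ⟨A, hA, rfl⟩ | h0
    · exact Or.inr ⟨L :: A, rfl, accw_Lform A hA⟩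
    · exact absurd h0 hWn0
  have hsyn : synCon (w U) (w W) := Con.le_def.mp hCon_le_syn hequiv
  have hiff := hsyn 1 1
  rw [one_mul, one_mul, mul_one, mul_one] at hiff
  have hUT : Tset (w U) := hiff.mpr hWT
  rcases hUT with h0 | ⟨l, hl, hacc⟩
  · exact absurd (hCon.trans (hCon.symm hequiv) h0) hWn0
  · obtain rfl : U = l := w_inj hl
    have hspec := spec_runL U
    rw [hacc] at hspec
    rcases hspec with ⟨B, hB, rfl⟩ | ⟨B, C, D, hB, hC, hD, rfl⟩ |
      ⟨B, C, D, E, hB, hC, hD, hE, hn, rfl⟩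
    · exact Or.inl ⟨B, Aword_of_Aw hB, rfl⟩
    · exact Or.inr (Or.inl ⟨B, C, D, Aword_of_Aw hB, Aword_of_Aw hC, Aword_of_Aw hD, by simp⟩)
    · refine Or.inr (Or.inr ⟨?_, ?_, ?_, ?_, ?_, ?_, ?_, ?_, M :: B, C, D, E, ?_⟩)
      · -- L ∉ U
        have h1 := ATl_not_mem hB (y := L) rfl
        have h2 := ATl_not_mem hC (y := L) rfl
        have h3 := ATl_not_mem hD (y := L) rfl
        have h4 := ATl_not_mem hE (y := L) rfl
        simp [List.mem_append, List.mem_cons, h1, h2, h3, h4]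
      · -- g ∉ U
        have h1 := ATl_not_mem hB (y := g) rfl
        have h2 := ATl_not_mem hC (y := g) rfl
        have h3 := ATl_not_mem hD (y := g) rfl
        have h4 := ATl_not_mem hE (y := g) rfl
        simp [List.mem_append, List.mem_cons, h1, h2, h3, h4]
      · -- count M
        have h1 := ATl_count hB (y := M) rfl
        have h2 := ATl_count hC (y := M) rfl
        have h3 := ATl_count hD (y := M) rfl
        have h4 := ATl_count hE (y := M) rfl
        simp [List.count_append, List.count_cons, h1, h2, h3, h4]
      · -- head?
        simp
      · -- count P
        have h1 := ATl_count hB (y := P) rfl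
        have h2 := ATl_count hC (y := P) rfl
        have h3 := ATl_count hD (y := P) rfl
        have h4 := ATl_count hE (y := P) rfl
        simp [List.count_append, List.count_cons, h1, h2, h3, h4]
      · -- count R
        have h1 := ATl_count hB (y := R) rfl
        have h2 := ATl_count hC (y := R) rfl
        have h3 := ATl_count hD (y := R) rfl
        have h4 := ATl_count hE (y := R) rfl
        simp [List.count_append, List.count_cons, h1, h2, h3, h4]
      · -- count Q
        have h1 := ATl_count hB (y := Q) rfl
        have h2 := ATl_count hC (y := Q) rfl
        have h3 := ATl_count hD (y := Q) rfl
        have h4 := ATl_count hE (y := Q) rfl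
        simp [List.count_append, List.count_cons, h1, h2, h3, h4]
      · -- countP isTS
        have hn' : B.countP isTS + C.countP isTS + D.countP isTS + E.countP isTS = 1 := hn
        simp only [List.countP_append, List.countP_cons, show isTS M = false from rfl,
          show isTS P = false from rfl, show isTS R = false from rfl,
          show isTS Q = false from rfl, Bool.false_eq_true, if_false, reduceIte]
        omega
      · -- decomposition
        simp
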